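/- Let n ≥ 1 be an integer, P ≥ 1, C > 0, ε > 0 real numbers, and L = εC/(n(P+1)). Let N = {1, …, n} be a set of users, where user k has demand d_k ∈ ℂ with Im(d_k) ≥ 0 and −Re(d_k) ≤ P·Im(d_k) whenever Re(d_k) < 0, and utility u_k ≥ 0. Let OPT = max{ ∑_{k∈S} u_k : S ⊆ N, |∑_{k∈S} d_k| ≤ C }. Suppose Ŝ ⊆ N maximizes ∑_{k∈S} u_k over all S ⊆ N satisfying |∑_{k∈S} ĥd_k| ≤ (1+2ε)·C, where ĥd_k are the rounded demands. Then ∑_{k∈Ŝ} u_k ≥ OPT and |∑_{k∈Ŝ} d_k| ≤ (1+3ε)·C; that is, Ŝ is a (1, 1+3ε)-approximation to the complex-demand knapsack problem. -/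

import Mathlib

/-- The rounded demand: real part rounded up (resp. down) to a multiple of `L`
when it is nonnegative (resp. negative), imaginary part always rounded up. -/
noncomputable def roundDemand (L : ℝ) (d : ℂ) : ℂ :=
  if 0 ≤ d.re then
    ⟨(⌈d.re / L⌉ : ℤ) * L, (⌈d.im / L⌉ : ℤ) * L⟩
  else
    ⟨(⌊d.re / L⌋ : ℤ) * L, (⌈d.im / L⌉ : ℤ) * L⟩

lemma ceil_err (L x : ℝ) (hL : 0 < L) : |(⌈x/L⌉ : ℤ) * L - x| ≤ L := by
  have h1 := Int.le_ceil (x/L)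
  have h2 := Int.ceil_lt_add_one (x/L)
  have e1 := mul_le_mul_of_nonneg_right h1 hL.le
  have e2 := mul_le_mul_of_nonneg_right h2.le hL.le
  have e3 : x / L * L = x := div_mul_cancel₀ x hL.ne'
  rw [abs_le]
  constructor
  · nlinarith
  · nlinarith

lemma floor_err (L x : ℝ) (hL : 0 < L) : |(⌊x/L⌋ : ℤ) * L - x| ≤ L := by
  have h1 := Int.floor_le (x/L)
  have h2 := Int.sub_one_lt_floor (x/L)
  have e1 := mul_le_mul_of_nonneg_right h1 hL.le
  have e2 := mul_le_mul_of_nonneg_right h2.le hL.le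
  have e3 : x / L * L = x := div_mul_cancel₀ x hL.ne'
  rw [abs_le]
  constructor
  · nlinarith
  · nlinarith

lemma roundDemand_err (L : ℝ) (hL : 0 < L) (d : ℂ) :
    ‖roundDemand L d - d‖ ≤ 2 * L := by
  have hre : |(roundDemand L d - d).re| ≤ L := by
    rw [Complex.sub_re]
    unfold roundDemand
    split <;> simp only [] <;> [exact ceil_err L d.re hL; exact floor_err L d.re hL]
  have him : |(roundDemand L d - d).im| ≤ L := by
    rw [Complex.sub_im]
    unfold roundDemand
    split <;> simp only [] <;> exact ceil_err L d.im hL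
  calc ‖roundDemand L d - d‖ ≤ |(roundDemand L d - d).re| + |(roundDemand L d - d).im| :=
        Complex.norm_le_abs_re_add_abs_im _
    _ ≤ 2 * L := by linarith

/-- a set `Ŝ` maximizing total utility subject to the rounded
capacity constraint `|∑ ĥd_k| ≤ (1+2ε)C` is a `(1, 1+3ε)`-approximation to the
complex-demand knapsack problem: its utility is at least the optimum `OPT`
and its (exact) total demand has magnitude at most `(1+3ε)C`. -/
theorem stmt_9 (n : ℕ) (hn : 1 ≤ n) (P C ε L : ℝ)
    (hP : 1 ≤ P) (hC : 0 < C) (hε : 0 < ε)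
    (hL : L = ε * C / (n * (P + 1)))
    (d : Fin n → ℂ) (u : Fin n → ℝ) (hu : ∀ k, 0 ≤ u k)
    (hIm : ∀ k, 0 ≤ (d k).im)
    (hArg : ∀ k, (d k).re < 0 → -(d k).re ≤ P * (d k).im)
    (Shat : Finset (Fin n))
    (hFeas : ‖∑ k ∈ Shat, roundDemand L (d k)‖ ≤ (1 + 2 * ε) * C)
    (hMax : ∀ S : Finset (Fin n),
      ‖∑ k ∈ S, roundDemand L (d k)‖ ≤ (1 + 2 * ε) * C →
      ∑ k ∈ S, u k ≤ ∑ k ∈ Shat, u k) :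
    (∀ S : Finset (Fin n), ‖∑ k ∈ S, d k‖ ≤ C →
        ∑ k ∈ S, u k ≤ ∑ k ∈ Shat, u k) ∧
    ‖∑ k ∈ Shat, d k‖ ≤ (1 + 3 * ε) * C := by
  have hn' : (0:ℝ) < n := by exact_mod_cast hn
  have hLpos : 0 < L := by
    rw [hL]; positivity
  have hLC : (n:ℝ) * (P + 1) * L = ε * C := by
    rw [hL]; field_simp
  have key : ∀ S : Finset (Fin n),
      ‖∑ k ∈ S, roundDemand L (d k) - ∑ k ∈ S, d k‖ ≤ ε * C := by
    intro S
    rw [← Finset.sum_sub_distrib]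
    calc ‖∑ k ∈ S, (roundDemand L (d k) - d k)‖
        ≤ ∑ k ∈ S, ‖roundDemand L (d k) - d k‖ := by
          exact norm_sum_le _ _
      _ ≤ ∑ k ∈ S, 2 * L := Finset.sum_le_sum fun k _ => roundDemand_err L hLpos (d k)
      _ = S.card * (2 * L) := by rw [Finset.sum_const, nsmul_eq_mul]
      _ ≤ n * (2 * L) := by
          have hc : S.card ≤ n := by simpa using Finset.card_le_univ S
          have : (S.card : ℝ) ≤ n := by exact_mod_cast hc
          nlinarith
      _ ≤ ε * C := by
          nlinarith [mul_nonneg (mul_nonneg hn'.le hLpos.le) (by linarith : (0:ℝ) ≤ P - 1)]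
  constructor
  · intro S hS
    apply hMax
    calc ‖∑ k ∈ S, roundDemand L (d k)‖
        ≤ ‖∑ k ∈ S, d k‖ +
          ‖∑ k ∈ S, roundDemand L (d k) - ∑ k ∈ S, d k‖ := by
          have := norm_add_le (∑ k ∈ S, d k)
            (∑ k ∈ S, roundDemand L (d k) - ∑ k ∈ S, d k)
          simpa using this
      _ ≤ C + ε * C := add_le_add hS (key S)
      _ ≤ (1 + 2 * ε) * C := by nlinarith
  · calc ‖∑ k ∈ Shat, d k‖
        ≤ ‖∑ k ∈ Shat, roundDemand L (d k)‖ +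
          ‖∑ k ∈ Shat, roundDemand L (d k) - ∑ k ∈ Shat, d k‖ := by
          have := norm_add_le (∑ k ∈ Shat, roundDemand L (d k))
            (∑ k ∈ Shat, d k - ∑ k ∈ Shat, roundDemand L (d k))
          rw [← norm_neg (∑ k ∈ Shat, d k - _)] at this
          simpa [neg_sub] using this
      _ ≤ (1 + 2 * ε) * C + ε * C := add_le_add hFeas (key Shat)
      _ = (1 + 3 * ε) * C := by ring
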